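/- arXiv:1511.04282 — 5 statements merged into one kernel-verified Lean document; each statement's English description precedes it below -/
import Mathlib

section
/- Let G be a connected bipartite graph with bipartition of its vertex set into nonempty independent sets I₁ and I₂. Then there is no vector λ of strictly positive arrival rates such that for every independent set I of G, the sum of λ over I is strictly less than the sum of λ over the neighborhood E(I) of I. In other words, NCOND(G) is empty for bipartite graphs. -/
open Finset

open Classical in
/-- Neighborhood (in `G`) of a finite set `A` of vertices: all vertices adjacent
to some vertex of `A`. -/
noncomputable def nbrSet {V : Type*} [Fintype V] (G : SimpleGraph V) (A : Finset V) : Finset V :=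
  Finset.univ.filter (fun j => ∃ i ∈ A, G.Adj i j)

/-- An independent set: a nonempty set of pairwise non-adjacent vertices. -/
def IsIndepSet {V : Type*} (G : SimpleGraph V) (I : Finset V) : Prop :=
  I.Nonempty ∧ ∀ i ∈ I, ∀ j ∈ I, ¬ G.Adj i j

/-- The condition NCOND: for every independent set `I`, the total rate on `I`
is strictly less than the total rate on its neighborhood. -/
def NCond {V : Type*} [Fintype V] (G : SimpleGraph V) (lam : V → ℝ) : Prop :=
  ∀ I : Finset V, IsIndepSet G I → ∑ i ∈ I, lam i < ∑ j ∈ nbrSet G I, lam j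

/-- for a connected bipartite graph (bipartition into nonempty
independent sets `I₁`, `I₂`), no strictly positive rate vector satisfies NCOND. -/
theorem ncond_empty_of_bipartite {V : Type*} [Fintype V] [DecidableEq V] (G : SimpleGraph V)
    (hconn : G.Connected) (I₁ I₂ : Finset V)
    (h1 : I₁.Nonempty) (h2 : I₂.Nonempty)
    (hdisj : Disjoint I₁ I₂) (hunion : I₁ ∪ I₂ = Finset.univ)
    (hind1 : ∀ i ∈ I₁, ∀ j ∈ I₁, ¬ G.Adj i j)
    (hind2 : ∀ i ∈ I₂, ∀ j ∈ I₂, ¬ G.Adj i j) :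
    ¬ ∃ lam : V → ℝ, (∀ v, 0 < lam v) ∧ NCond G lam := by
  rintro ⟨lam, hpos, hn⟩
  have hsub : ∀ (A B : Finset V), (∀ i ∈ A, ∀ j ∈ A, ¬ G.Adj i j) →
      (A ∪ B = Finset.univ) → nbrSet G A ⊆ B := by
    intro A B hA hu j hj
    simp only [nbrSet, Finset.mem_filter] at hj
    obtain ⟨-, i, hi, hadj⟩ := hj
    have : j ∈ A ∪ B := hu ▸ Finset.mem_univ j
    rcases Finset.mem_union.1 this with hjA | hjB
    · exact absurd hadj (hA i hi j hjA)
    · exact hjB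
  have key : ∀ (A B : Finset V), A.Nonempty → (∀ i ∈ A, ∀ j ∈ A, ¬ G.Adj i j) →
      (A ∪ B = Finset.univ) → ∑ i ∈ A, lam i < ∑ j ∈ B, lam j := by
    intro A B hAne hA hu
    calc ∑ i ∈ A, lam i < ∑ j ∈ nbrSet G A, lam j := hn A ⟨hAne, hA⟩
      _ ≤ ∑ j ∈ B, lam j :=
        Finset.sum_le_sum_of_subset_of_nonneg (hsub A B hA hu)
          (fun v _ _ => (hpos v).le)
  have h12 := key I₁ I₂ h1 hind1 hunion
  have h21 := key I₂ I₁ h2 hind2 (by rw [Finset.union_comm]; exact hunion)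
  linarith
end

section
/- A separable graph does not contain the pendant graph as an induced subgraph. That is, if G is separable, there do not exist four distinct vertices a, b, c, d of G such that c is adjacent to each of a, b, d, a is adjacent to b, and d is adjacent to neither a nor b. -/
open Finset

/-- A maximal independent set: independent, and every outside vertex has a neighbor inside. -/
def IsMaxIndep {V : Type*} (G : SimpleGraph V) (I : Finset V) : Prop :=
  IsIndepSet G I ∧ ∀ j, j ∉ I → ∃ i ∈ I, G.Adj i j

/-- `G` is separable of order `q`. -/
def SeparableOfOrder {V : Type*} (G : SimpleGraph V) (q : ℕ) : Prop :=
  ∃ P : Fin q → Finset V,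
    (∀ v : V, ∃! k : Fin q, v ∈ P k) ∧
    (∀ k, IsMaxIndep G (P k)) ∧
    (∀ k l : Fin q, k ≠ l → ∀ u ∈ P k, ∀ v ∈ P l, G.Adj u v)

/-- a separable graph does not contain the pendant graph as an induced
subgraph: there are no four distinct vertices `a, b, c, d` such that `c` is adjacent to
each of `a, b, d`, `a` is adjacent to `b`, and `d` is adjacent to neither `a` nor `b`. -/
theorem separable_no_induced_pendant {V : Type*} [Fintype V] (G : SimpleGraph V)
    (hsep : ∃ q : ℕ, 2 ≤ q ∧ SeparableOfOrder G q) :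
    ¬ ∃ a b c d : V, a ≠ b ∧ a ≠ c ∧ a ≠ d ∧ b ≠ c ∧ b ≠ d ∧ c ≠ d ∧
      G.Adj c a ∧ G.Adj c b ∧ G.Adj c d ∧ G.Adj a b ∧ ¬ G.Adj d a ∧ ¬ G.Adj d b := by
  rintro ⟨a, b, c, d, hab, -, -, -, -, -, -, -, -, hAab, hda, hdb⟩
  obtain ⟨q, -, P, hu, hmax, hcross⟩ := hsep
  obtain ⟨ka, hka, -⟩ := hu a
  obtain ⟨kb, hkb, -⟩ := hu b
  obtain ⟨kd, hkd, -⟩ := hu d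
  have hda' : kd = ka := by
    by_contra h
    exact hda (hcross kd ka h d hkd a hka)
  have hdb' : kd = kb := by
    by_contra h
    exact hdb (hcross kd kb h d hkd b hkb)
  have : ka = kb := hda' ▸ hdb'
  exact ((hmax ka).1.2 a hka b (this ▸ hkb)) hAab
end

section
/- Every connected graph that is non-bipartite and non-separable contains, as an induced subgraph, either the pendant graph or an odd cycle of length at least 5. -/
open Finset

/-- `G` is bipartite: its vertex set can be partitioned into two (possibly empty)
independent sets. -/
def IsBipartite {V : Type*} [Fintype V] [DecidableEq V] (G : SimpleGraph V) : Prop :=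
  ∃ A B : Finset V, Disjoint A B ∧ A ∪ B = Finset.univ ∧
    (∀ i ∈ A, ∀ j ∈ A, ¬ G.Adj i j) ∧ (∀ i ∈ B, ∀ j ∈ B, ¬ G.Adj i j)

/-- `G` contains the pendant graph as an induced subgraph. -/
def HasInducedPendant {V : Type*} (G : SimpleGraph V) : Prop :=
  ∃ a b c d : V, a ≠ b ∧ a ≠ c ∧ a ≠ d ∧ b ≠ c ∧ b ≠ d ∧ c ≠ d ∧
    G.Adj c a ∧ G.Adj c b ∧ G.Adj c d ∧ G.Adj a b ∧ ¬ G.Adj d a ∧ ¬ G.Adj d b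

/-- `G` contains an induced odd cycle of length `2p+1 ≥ 5`. -/
def HasInducedLongOddCycle {V : Type*} (G : SimpleGraph V) : Prop :=
  ∃ p : ℕ, 2 ≤ p ∧ ∃ v : ZMod (2 * p + 1) → V, Function.Injective v ∧
    (∀ k : ZMod (2 * p + 1), G.Adj (v k) (v (k + 1))) ∧
    (∀ i j : ZMod (2 * p + 1), i ≠ j → j ≠ i + 1 → i ≠ j + 1 → ¬ G.Adj (v i) (v j))

open Finset

/-- A closed walk of length `n`, as a function. -/
def CWalk {V : Type*} (G : SimpleGraph V) (n : ℕ) : Prop :=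
  ∃ f : ℕ → V, f n = f 0 ∧ ∀ i < n, G.Adj (f i) (f (i + 1))

lemma cwalk_pieces {V : Type*} {G : SimpleGraph V} {m : ℕ} (hm : Odd m) {f : ℕ → V}
    (hf0 : f m = f 0) (hadj : ∀ i < m, G.Adj (f i) (f (i + 1)))
    (hmin : ∀ k, Odd k → k < m → ¬ CWalk G k) :
    (∀ a b, a < b → b < m → f a ≠ f b) ∧
    (∀ a b, a + 2 ≤ b → b < m → ¬(a = 0 ∧ b = m - 1) → ¬ G.Adj (f a) (f b)) := by
  constructor
  · intro a b hab hb heq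
    have c1 : CWalk G (b - a) := by
      refine ⟨fun i => f (a + i), ?_, fun i hi => ?_⟩
      · have : a + (b - a) = b := by omega
        simp only [this, Nat.add_zero, heq]
      · have h1 : a + (i + 1) = (a + i) + 1 := by omega
        simp only [h1]
        exact hadj (a + i) (by omega)
    have c2 : CWalk G (m - (b - a)) := by
      refine ⟨fun i => if i ≤ a then f i else f (i + (b - a)), ?_, fun i hi => ?_⟩
      · have h1 : ¬ (m - (b - a) ≤ a) := by omega
        have h2 : m - (b - a) + (b - a) = m := by omega
        simp only [h1, if_false, h2, if_pos (Nat.zero_le a), hf0]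
      · rcases lt_trichotomy i a with h | h | h
        · have h1 : i ≤ a := by omega
          have h2 : i + 1 ≤ a := by omega
          simp only [if_pos h1, if_pos h2]
          exact hadj i (by omega)
        · have h1 : i ≤ a := le_of_eq h
          have h2 : ¬ (i + 1 ≤ a) := by omega
          have h3 : i + 1 + (b - a) = b + 1 := by omega
          have h4 : f i = f b := by rw [h, heq]
          simp only [if_pos h1, h2, if_false, h3, h4]
          exact hadj b (by omega)
        · have h1 : ¬ (i ≤ a) := by omega
          have h2 : ¬ (i + 1 ≤ a) := by omega
          have h3 : i + 1 + (b - a) = (i + (b - a)) + 1 := by omega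
          simp only [h1, h2, if_false, h3]
          exact hadj (i + (b - a)) (by omega)
    rcases Nat.even_or_odd (b - a) with he | ho
    · exact hmin _ (Nat.Odd.sub_even (by omega) hm he) (by omega) c2
    · exact hmin _ ho (by omega) c1
  · intro a b hab hb hne hAdj
    have c1 : CWalk G (b - a + 1) := by
      refine ⟨fun i => if i ≤ b - a then f (a + i) else f a, ?_, fun i hi => ?_⟩
      · simp only [Nat.lt_irrefl, if_neg (by omega : ¬ (b - a + 1 ≤ b - a)),
          if_pos (Nat.zero_le _), Nat.add_zero]
      · rcases lt_or_eq_of_le (by omega : i + 1 ≤ b - a + 1) with h | h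
        · have h1 : i ≤ b - a := by omega
          have h2 : i + 1 ≤ b - a := by omega
          have h3 : a + (i + 1) = (a + i) + 1 := by omega
          simp only [if_pos h1, if_pos h2, h3]
          exact hadj (a + i) (by omega)
        · have h1 : i ≤ b - a := by omega
          have h2 : ¬ (i + 1 ≤ b - a) := by omega
          have h3 : a + i = b := by omega
          simp only [if_pos h1, h2, if_false, h3]
          exact hAdj.symm
    have c2 : CWalk G (a + 1 + (m - b)) := by
      refine ⟨fun i => if i ≤ a then f i else f (i + (b - a - 1)), ?_, fun i hi => ?_⟩
      · have h1 : ¬ (a + 1 + (m - b) ≤ a) := by omega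
        have h2 : a + 1 + (m - b) + (b - a - 1) = m := by omega
        simp only [h1, if_false, h2, if_pos (Nat.zero_le a), hf0]
      · rcases lt_trichotomy i a with h | h | h
        · simp only [if_pos (by omega : i ≤ a), if_pos (by omega : i + 1 ≤ a)]
          exact hadj i (by omega)
        · have h1 : i ≤ a := le_of_eq h
          have h2 : ¬ (i + 1 ≤ a) := by omega
          have h3 : i + 1 + (b - a - 1) = b := by omega
          have h4 : f i = f a := by rw [h]
          simp only [if_pos h1, h2, if_false, h3, h4]
          exact hAdj
        · have h1 : ¬ (i ≤ a) := by omega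
          have h2 : ¬ (i + 1 ≤ a) := by omega
          have h3 : i + 1 + (b - a - 1) = (i + (b - a - 1)) + 1 := by omega
          simp only [h1, h2, if_false, h3]
          exact hadj (i + (b - a - 1)) (by omega)
    rcases Nat.even_or_odd (b - a + 1) with he | ho
    · have hodd2 : Odd (m + 2) := by obtain ⟨t, ht⟩ := hm; exact ⟨t + 1, by omega⟩
      have : a + 1 + (m - b) = (m + 2) - (b - a + 1) := by omega
      rw [this] at c2
      exact hmin _ (Nat.Odd.sub_even (by omega) hodd2 he) (by omega) c2
    · exact hmin _ ho (by omega) c1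

lemma long_odd_cycle_of_cwalk {V : Type*} {G : SimpleGraph V}
    (htf : ¬ ∃ a b c : V, G.Adj a b ∧ G.Adj a c ∧ G.Adj b c)
    (h : ∃ n, Odd n ∧ CWalk G n) :
    HasInducedLongOddCycle G := by
  classical
  let m := Nat.find h
  obtain ⟨hmodd, f, hf0, hadj⟩ : Odd m ∧ CWalk G m := Nat.find_spec h
  have hmin : ∀ k, Odd k → k < m → ¬ CWalk G k := fun k hk hlt hc =>
    Nat.find_min h hlt ⟨hk, hc⟩
  have hm1 : m ≠ 1 := by
    intro h1
    have := hadj 0 (by omega)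
    rw [(by omega : (0:ℕ) + 1 = m), hf0] at this
    exact G.irrefl this
  have hm3 : m ≠ 3 := by
    intro h3
    refine htf ⟨f 0, f 1, f 2, hadj 0 (by omega), ?_, hadj 1 (by omega)⟩
    have := hadj 2 (by omega)
    rw [(by omega : (2:ℕ) + 1 = m), hf0] at this
    exact this.symm
  have hm5 : 5 ≤ m := by
    rcases hmodd with ⟨t, ht⟩
    omega
  obtain ⟨hdist, hchord⟩ := cwalk_pieces hmodd hf0 hadj hmin
  obtain ⟨t, ht⟩ := hmodd
  have hmt : m = 2 * t + 1 := ht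
  haveI : NeZero (2 * t + 1) := ⟨by omega⟩
  haveI : Fact (1 < 2 * t + 1) := ⟨by omega⟩
  have hvlt : ∀ k : ZMod (2 * t + 1), k.val < m := fun k => by have := ZMod.val_lt k; omega
  have hvadd1 : ∀ k : ZMod (2 * t + 1), (k + 1).val = (k.val + 1) % m := by
    intro k
    rw [ZMod.val_add, ZMod.val_one, hmt]
  refine ⟨t, by omega, fun k => f k.val, ?_, ?_, ?_⟩
  · intro k l hkl
    by_contra hne
    have hv : k.val ≠ l.val := fun e => hne (ZMod.val_injective _ e)
    rcases Nat.lt_or_ge k.val l.val with hlt | hge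
    · exact hdist _ _ hlt (hvlt l) hkl
    · exact hdist _ _ (by omega) (hvlt k) hkl.symm
  · intro k
    show G.Adj (f k.val) (f ((k + 1).val))
    rcases Nat.lt_or_ge (k.val + 1) m with h1 | h1
    · have : (k + 1).val = k.val + 1 := by rw [hvadd1, Nat.mod_eq_of_lt h1]
      rw [this]
      exact hadj k.val (hvlt k)
    · have hk : k.val + 1 = m := by have := hvlt k; omega
      have : (k + 1).val = 0 := by rw [hvadd1, hk, Nat.mod_self]
      rw [this, ← hf0, ← hk]
      exact hadj k.val (hvlt k)
  · intro i j hij hji1 hij1 hA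
    replace hA : G.Adj (f i.val) (f j.val) := hA
    have hv : i.val ≠ j.val := fun e => hij (ZMod.val_injective _ e)
    rcases Nat.lt_or_ge i.val j.val with hlt | hge
    · have h2 : i.val + 2 ≤ j.val := by
        rcases Nat.lt_or_ge (i.val + 1) j.val with h | h
        · omega
        · exfalso
          have hj : j.val = i.val + 1 := by omega
          have : (i + 1).val = j.val := by
            rw [hvadd1, hj]; exact Nat.mod_eq_of_lt (by have := hvlt j; omega)
          exact hji1 (ZMod.val_injective _ this.symm)
      have hne2 : ¬ (i.val = 0 ∧ j.val = m - 1) := by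
        rintro ⟨h0, hm1'⟩
        have : (j + 1).val = i.val := by
          rw [hvadd1, hm1', h0, (by omega : m - 1 + 1 = m), Nat.mod_self]
        exact hij1 (ZMod.val_injective _ this.symm)
      exact hchord _ _ h2 (hvlt j) hne2 hA
    · have hlt : j.val < i.val := by omega
      have h2 : j.val + 2 ≤ i.val := by
        rcases Nat.lt_or_ge (j.val + 1) i.val with h | h
        · omega
        · exfalso
          have hi : i.val = j.val + 1 := by omega
          have : (j + 1).val = i.val := by
            rw [hvadd1, hi]; exact Nat.mod_eq_of_lt (by have := hvlt i; omega)
          exact hij1 (ZMod.val_injective _ this.symm)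
      have hne2 : ¬ (j.val = 0 ∧ i.val = m - 1) := by
        rintro ⟨h0, hm1'⟩
        have : (i + 1).val = j.val := by
          rw [hvadd1, hm1', h0, (by omega : m - 1 + 1 = m), Nat.mod_self]
        exact hji1 (ZMod.val_injective _ this.symm)
      exact hchord _ _ h2 (hvlt i) hne2 hA.symm

lemma exists_odd_cwalk {V : Type*} [Fintype V] [DecidableEq V] {G : SimpleGraph V}
    (hconn : G.Connected) (hnb : ¬ IsBipartite G) : ∃ n, Odd n ∧ CWalk G n := by
  classical
  obtain ⟨r⟩ := hconn.nonempty
  have hedge : ∃ u v, G.Adj u v ∧ G.dist r u % 2 = G.dist r v % 2 := by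
    by_contra hno
    push_neg at hno
    refine hnb ⟨Finset.univ.filter (fun v => G.dist r v % 2 = 0),
      Finset.univ.filter (fun v => ¬ (G.dist r v % 2 = 0)), ?_, ?_, ?_, ?_⟩
    · exact Finset.disjoint_filter_filter_not _ _ _
    · exact Finset.filter_union_filter_not_eq _ _
    · intro i hi j hj hA
      simp only [Finset.mem_filter, Finset.mem_univ, true_and] at hi hj
      exact hno i j hA (by omega)
    · intro i hi j hj hA
      simp only [Finset.mem_filter, Finset.mem_univ, true_and] at hi hj
      exact hno i j hA (by omega)
  obtain ⟨u, v, huv, hpar⟩ := hedge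
  obtain ⟨w1, hw1⟩ := hconn.exists_walk_length_eq_dist r u
  obtain ⟨w2, hw2⟩ := hconn.exists_walk_length_eq_dist r v
  have hW : ∃ w : G.Walk r r, w.length = G.dist r u + (G.dist r v + 1) := by
    refine ⟨w1.append (SimpleGraph.Walk.cons huv w2.reverse), ?_⟩
    simp [hw1, hw2]
  obtain ⟨w, hlen⟩ := hW
  refine ⟨G.dist r u + (G.dist r v + 1), by rw [Nat.odd_iff]; omega,
    w.getVert, ?_, fun i hi => w.adj_getVert_succ (by omega)⟩
  rw [← hlen]; simp

section Paw

variable {V : Type*} {G : SimpleGraph V}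

lemma two_of_three (hp : ¬ HasInducedPendant G) {a b c w : V}
    (hab : G.Adj a b) (hac : G.Adj a c) (hbc : G.Adj b c) (hwa : G.Adj w a) :
    G.Adj w b ∨ G.Adj w c := by
  by_cases hwb : w = b
  · subst hwb; exact Or.inr hbc
  by_cases hwc : w = c
  · subst hwc; exact Or.inl hbc.symm
  by_contra hcon
  push_neg at hcon
  exact hp ⟨b, c, a, w, hbc.ne, hab.ne', fun e => hwb e.symm, hac.ne', fun e => hwc e.symm,
    hwa.ne', hab, hac, hwa.symm, hbc, hcon.1, hcon.2⟩

/-- `v` lies in a triangle. -/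
def InTri (G : SimpleGraph V) (v : V) : Prop := ∃ x y, G.Adj v x ∧ G.Adj v y ∧ G.Adj x y

lemma inTri_of_adj (hp : ¬ HasInducedPendant G) {u w : V} (hu : InTri G u) (huw : G.Adj u w) :
    InTri G w := by
  obtain ⟨x, y, hux, huy, hxy⟩ := hu
  by_cases hwx : w = x
  · subst hwx; exact ⟨u, y, hux.symm, hxy, huy⟩
  by_cases hwy : w = y
  · subst hwy; exact ⟨u, x, huy.symm, hxy.symm, hux⟩
  rcases two_of_three hp hux huy hxy huw.symm with h | h
  · exact ⟨u, x, huw.symm, h, hux⟩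
  · exact ⟨u, y, huw.symm, h, huy⟩

lemma inTri_all (hp : ¬ HasInducedPendant G) (hconn : G.Connected)
    (htri : ∃ a b c : V, G.Adj a b ∧ G.Adj a c ∧ G.Adj b c) (v : V) : InTri G v := by
  obtain ⟨a, b, c, hab, hac, hbc⟩ := htri
  have key : ∀ (x y : V) (w : G.Walk x y), InTri G x → InTri G y := by
    intro x y w
    induction w with
    | nil => exact id
    | cons h p ih => exact fun hx => ih (inTri_of_adj hp hx h)
  obtain ⟨w⟩ := hconn a v
  exact key a v w ⟨b, c, hab, hac, hbc⟩

lemma edge_tri (hp : ¬ HasInducedPendant G) (hconn : G.Connected)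
    (htri : ∃ a b c : V, G.Adj a b ∧ G.Adj a c ∧ G.Adj b c) {u v : V} (huv : G.Adj u v) :
    ∃ t, G.Adj u t ∧ G.Adj v t := by
  obtain ⟨x, y, hux, huy, hxy⟩ := inTri_all hp hconn htri u
  by_cases hvx : v = x
  · subst hvx; exact ⟨y, huy, hxy⟩
  by_cases hvy : v = y
  · subst hvy; exact ⟨x, hux, hxy.symm⟩
  rcases two_of_three hp hux huy hxy huv.symm with h | h
  · exact ⟨x, hux, h⟩
  · exact ⟨y, huy, h⟩

lemma no_k2k1 (hp : ¬ HasInducedPendant G) (hconn : G.Connected)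
    (htri : ∃ a b c : V, G.Adj a b ∧ G.Adj a c ∧ G.Adj b c) :
    ∀ a b c : V, G.Adj a b → ¬ G.Adj c a → ¬ G.Adj c b → c ≠ a → c ≠ b → False := by
  have aux : ∀ n : ℕ, ∀ a b c : V, G.Adj a b → ¬ G.Adj c a → ¬ G.Adj c b → c ≠ a → c ≠ b →
      G.dist c a = n → G.dist c a ≤ G.dist c b → False := by
    intro n
    induction n using Nat.strong_induction_on with
    | _ n ih =>
    intro a b c hab hca hcb hc1 hc2 hdca hle
    have hca0 : G.dist c a ≠ 0 := fun h => hc1 (hconn.dist_eq_zero_iff.mp h)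
    have hca1 : G.dist c a ≠ 1 := fun h => hca (SimpleGraph.dist_eq_one_iff_adj.mp h)
    have hcb0 : G.dist c b ≠ 0 := fun h => hc2 (hconn.dist_eq_zero_iff.mp h)
    have hcb1 : G.dist c b ≠ 1 := fun h => hcb (SimpleGraph.dist_eq_one_iff_adj.mp h)
    have hn2 : 2 ≤ n := by omega
    obtain ⟨w, hwlen⟩ := hconn.exists_walk_length_eq_dist c a
    cases w with
    | nil => exact hc1 rfl
    | @cons _ d _ h p =>
      have hcd : G.Adj c d := h
      have hplen : p.length = n - 1 := by
        simp only [SimpleGraph.Walk.length_cons] at hwlen; omega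
      have hda : G.dist d a ≤ n - 1 := hplen ▸ SimpleGraph.dist_le p
      have hda' : G.dist d a = n - 1 := by
        have h1 : G.dist c a ≤ G.dist c d + G.dist d a := hconn.dist_triangle
        have hcd1 : G.dist c d = 1 := SimpleGraph.dist_eq_one_iff_adj.mpr hcd
        omega
      by_cases hn : n = 2
      · have hwa : G.Adj d a := SimpleGraph.dist_eq_one_iff_adj.mp (by omega)
        obtain ⟨t, hat, hbt⟩ := edge_tri hp hconn htri hab
        have htc : t ≠ c := fun e => hcb (e ▸ hbt).symm
        by_cases hct : G.Adj c t
        · exact hp ⟨a, b, t, c, hab.ne, hat.ne, Ne.symm hc1, hbt.ne, Ne.symm hc2, htc,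
            hat.symm, hbt.symm, hct.symm, hab, hca, hcb⟩
        · have hdt' : d ≠ t := fun e => hct (e ▸ hcd)
          by_cases hdb : G.Adj d b
          · exact hp ⟨a, b, d, c, hab.ne, hwa.ne', Ne.symm hc1, hdb.ne', Ne.symm hc2,
              hcd.ne', hwa, hdb, hcd.symm, hab, hca, hcb⟩
          · have hdt : G.Adj d t := (two_of_three hp hab hat hbt hwa).resolve_left hdb
            exact hp ⟨a, t, d, c, hat.ne, hwa.ne', Ne.symm hc1, Ne.symm hdt', htc,
              hcd.ne', hwa, hdt, hcd.symm, hat, hca, hct⟩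
      · have hdb2 : 2 ≤ G.dist d b := by
          have h1 : G.dist c b ≤ G.dist c d + G.dist d b := hconn.dist_triangle
          have hcd1 : G.dist c d = 1 := SimpleGraph.dist_eq_one_iff_adj.mpr hcd
          omega
        have hnda : ¬ G.Adj d a := fun h' => by
          have := SimpleGraph.dist_eq_one_iff_adj.mpr h'; omega
        have hndb : ¬ G.Adj d b := fun h' => by
          have := SimpleGraph.dist_eq_one_iff_adj.mpr h'; omega
        have hd1 : d ≠ a := fun e => by
          rw [e, SimpleGraph.dist_self] at hda'; omega
        have hd2 : d ≠ b := fun e => by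
          rw [e, SimpleGraph.dist_self] at hdb2; omega
        rcases le_total (G.dist d a) (G.dist d b) with hcase | hcase
        · exact ih (n - 1) (by omega) a b d hab hnda hndb hd1 hd2 hda' hcase
        · exact ih (G.dist d b) (by omega) b a d hab.symm hndb hnda hd2 hd1 rfl hcase
  intro a b c hab hca hcb h1 h2
  rcases le_total (G.dist c a) (G.dist c b) with h | h
  · exact aux _ a b c hab hca hcb h1 h2 rfl h
  · exact aux _ b a c hab.symm hcb hca h2 h1 rfl h

lemma separable_of [Fintype V] (hp : ¬ HasInducedPendant G) (hconn : G.Connected)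
    (htri : ∃ a b c : V, G.Adj a b ∧ G.Adj a c ∧ G.Adj b c) :
    ∃ q : ℕ, 2 ≤ q ∧ SeparableOfOrder G q := by
  classical
  have key := no_k2k1 hp hconn htri
  let r : V → V → Prop := fun u v => u = v ∨ ¬ G.Adj u v
  have hr : ∀ u v, ¬ r u v → G.Adj u v := fun u v h => by
    by_contra h2; exact h (Or.inr h2)
  have hsymm : ∀ {u v}, r u v → r v u := by
    rintro u v (rfl | h)
    · exact Or.inl rfl
    · exact Or.inr fun h2 => h h2.symm
  have htrans : ∀ {u v w}, r u v → r v w → r u w := by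
    rintro u v w (rfl | h1) h2
    · exact h2
    rcases h2 with rfl | h2
    · exact Or.inr h1
    by_cases hvu : v = u
    · exact Or.inr (hvu ▸ h2)
    by_cases hvw : v = w
    · exact Or.inr (hvw ▸ h1)
    by_contra h3
    exact key u w v (hr _ _ h3) (fun h' => h1 h'.symm) h2 hvu hvw
  let s : Setoid V := ⟨r, ⟨fun _ => Or.inl rfl, hsymm, htrans⟩⟩
  let q := Fintype.card (Quotient s)
  let e : Quotient s ≃ Fin q := Fintype.equivFin _
  have hq2 : 2 ≤ q := by
    obtain ⟨a, b, c, hab, -, -⟩ := htri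
    have hne : Quotient.mk s a ≠ Quotient.mk s b := by
      intro h
      rcases (Quotient.exact h : r a b) with h' | h'
      · exact hab.ne h'
      · exact h' hab
    have : Nontrivial (Quotient s) := ⟨_, _, hne⟩
    exact Fintype.one_lt_card
  refine ⟨q, hq2, fun k => Finset.univ.filter (fun v => e (Quotient.mk s v) = k), ?_, ?_, ?_⟩
  · intro v
    refine ⟨e (Quotient.mk s v), Finset.mem_filter.mpr ⟨Finset.mem_univ v, rfl⟩, fun k hk => ?_⟩
    simp only [Finset.mem_filter, Finset.mem_univ, true_and] at hk
    exact hk.symm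
  · intro k
    obtain ⟨x, hx⟩ := Quotient.exists_rep (e.symm k)
    have hxk : e (Quotient.mk s x) = k := by rw [hx]; simp
    refine ⟨⟨⟨x, Finset.mem_filter.mpr ⟨Finset.mem_univ x, hxk⟩⟩, ?_⟩, ?_⟩
    · intro i hi j hj hA
      simp only [Finset.mem_filter, Finset.mem_univ, true_and] at hi hj
      have hij : Quotient.mk s i = Quotient.mk s j := e.injective (hi.trans hj.symm)
      rcases (Quotient.exact hij : r i j) with h' | h'
      · exact G.irrefl (h' ▸ hA)
      · exact h' hA
    · intro j hj
      simp only [Finset.mem_filter, Finset.mem_univ, true_and] at hj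
      refine ⟨x, Finset.mem_filter.mpr ⟨Finset.mem_univ x, hxk⟩, ?_⟩
      refine hr _ _ (fun hrr => hj ?_)
      rw [← Quotient.sound hrr]; exact hxk
  · intro k l hkl u hu v hv
    simp only [Finset.mem_filter, Finset.mem_univ, true_and] at hu hv
    refine hr _ _ (fun hrr => hkl ?_)
    rw [← hu, ← hv]
    exact congrArg e (Quotient.sound hrr)

end Paw

/-- every connected graph which is non-bipartite and non-separable
contains, as an induced subgraph, the pendant graph or an odd cycle of length at
least 5. -/
theorem induced_pendant_or_long_odd_cycle {V : Type*} [Fintype V] [DecidableEq V]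
    (G : SimpleGraph V) (hconn : G.Connected)
    (hnb : ¬ IsBipartite G)
    (hns : ¬ ∃ q : ℕ, 2 ≤ q ∧ SeparableOfOrder G q) :
    HasInducedPendant G ∨ HasInducedLongOddCycle G := by
  classical
  by_contra hcon
  push_neg at hcon
  obtain ⟨hp, hc⟩ := hcon
  by_cases htri : ∃ a b c : V, G.Adj a b ∧ G.Adj a c ∧ G.Adj b c
  · exact hns (separable_of hp hconn htri)
  · exact hc (long_odd_cycle_of_cwalk htri (exists_odd_cwalk hconn hnb))
end

section
/- For the pendant graph with vertices {1,2,3,4} and edges {1,2},{1,3},{2,3},{3,4}, a strictly positive vector λ = (λ₁,λ₂,λ₃,λ₄) belongs to NCOND(G) if and only if it satisfies: λ₄ < λ₃, λ₃ < λ₄ + λ₁ + λ₂, λ₄ + λ₁ < λ₃ + λ₂, and λ₄ + λ₂ < λ₃ + λ₁ (together with λ₁ < λ₂ + λ₃ and λ₂ < λ₁ + λ₃, which follow automatically from positivity). -/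
open Finset

/-- The pendant graph, on vertices `0,1,2,3` (paper labels `1,2,3,4`), with edges
`{0,1}, {0,2}, {1,2}, {2,3}`. -/
def pendant : SimpleGraph (Fin 4) :=
  SimpleGraph.fromRel (fun a b =>
    (a = 0 ∧ b = 1) ∨ (a = 0 ∧ b = 2) ∨ (a = 1 ∧ b = 2) ∨ (a = 2 ∧ b = 3))

instance : DecidableRel pendant.Adj := fun a b =>
  decidable_of_iff _ (SimpleGraph.fromRel_adj _ a b).symm

instance (I : Finset (Fin 4)) : Decidable (IsIndepSet pendant I) := by
  unfold IsIndepSet; infer_instance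

lemma indep_cases : ∀ I : Finset (Fin 4), IsIndepSet pendant I →
    I = {0} ∨ I = {1} ∨ I = {2} ∨ I = {3} ∨ I = {0,3} ∨ I = {1,3} := by decide

lemma nbr0 : nbrSet pendant {0} = {1,2} := by
  ext x; simp [nbrSet, pendant]; fin_cases x <;> decide
lemma nbr1 : nbrSet pendant {1} = {0,2} := by
  ext x; simp [nbrSet, pendant]; fin_cases x <;> decide
lemma nbr2 : nbrSet pendant {2} = {0,1,3} := by
  ext x; simp [nbrSet, pendant]; fin_cases x <;> decide
lemma nbr3 : nbrSet pendant {3} = {2} := by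
  ext x; simp [nbrSet, pendant]; fin_cases x <;> decide
lemma nbr03 : nbrSet pendant {0,3} = {1,2} := by
  ext x; simp [nbrSet, pendant]; fin_cases x <;> decide
lemma nbr13 : nbrSet pendant {1,3} = {0,2} := by
  ext x; simp [nbrSet, pendant]; fin_cases x <;> decide

/-- for the pendant graph, a strictly positive vector `λ` satisfies NCOND
iff `λ₄ < λ₃ < λ₄+λ₁+λ₂`, `λ₄+λ₁ < λ₃+λ₂`, `λ₄+λ₂ < λ₃+λ₁` (together with
`λ₁ < λ₂+λ₃` and `λ₂ < λ₁+λ₃`). Here vertex `i` of the paper is `i-1 : Fin 4`. -/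
theorem ncond_pendant_iff (lam : Fin 4 → ℝ) (hpos : ∀ i, 0 < lam i) :
    NCond pendant lam ↔
      (lam 3 < lam 2 ∧ lam 2 < lam 3 + lam 0 + lam 1 ∧
       lam 3 + lam 0 < lam 2 + lam 1 ∧ lam 3 + lam 1 < lam 2 + lam 0 ∧
       lam 0 < lam 1 + lam 2 ∧ lam 1 < lam 0 + lam 2) := by
  constructor
  · intro h
    have h0 := h {0} ⟨⟨0, by simp⟩, by decide⟩
    have h1 := h {1} ⟨⟨1, by simp⟩, by decide⟩
    have h2 := h {2} ⟨⟨2, by simp⟩, by decide⟩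
    have h3 := h {3} ⟨⟨3, by simp⟩, by decide⟩
    have h03 := h {0,3} ⟨⟨0, by simp⟩, by decide⟩
    have h13 := h {1,3} ⟨⟨1, by simp⟩, by decide⟩
    rw [nbr0] at h0; rw [nbr1] at h1; rw [nbr2] at h2; rw [nbr3] at h3
    rw [nbr03] at h03; rw [nbr13] at h13
    simp [Finset.sum_insert, Finset.sum_singleton] at *
    refine ⟨by linarith, by linarith, by linarith, by linarith, by linarith, by linarith⟩
  · rintro ⟨a1, a2, a3, a4, a5, a6⟩ I hI
    rcases indep_cases I hI with rfl | rfl | rfl | rfl | rfl | rfl <;>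
      simp [nbr0, nbr1, nbr2, nbr3, nbr03, nbr13, Finset.sum_insert, Finset.sum_singleton] <;>
      linarith
end

section
/- For every ε ∈ (0, 2/5], the vector λ = (ε/2, ε/2, 1/2 − ε/4, 1/2 − 3ε/4) satisfies all the NCOND inequalities of the pendant graph (λ₄ < λ₃ < λ₄+λ₁+λ₂, λ₄+λ₁ < λ₃+λ₂, λ₄+λ₂ < λ₃+λ₁, and all entries positive), yet λ₄ ≥ α·λ₃ where α = (λ₃² − (λ₁−λ₂)²)/(λ₃(λ₃+λ₁+λ₂)). More precisely, λ₄ − αλ₃ = (ε/4)(1 − 5ε/2)/(1/2 + 3ε/4) ≥ 0. -/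
/-- for every `ε ∈ (0, 2/5]`, the vector
`λ = (ε/2, ε/2, 1/2 − ε/4, 1/2 − 3ε/4)` satisfies all NCOND inequalities of the
pendant graph, yet `λ₄ − αλ₃ = (ε/4)(1 − 5ε/2)/(1/2 + 3ε/4) ≥ 0`, where
`α = (λ₃² − (λ₁−λ₂)²)/(λ₃(λ₃+λ₁+λ₂))`. -/
theorem pendant_ncond_not_sufficient (ε l1 l2 l3 l4 α : ℝ)
    (hε0 : 0 < ε) (hε : ε ≤ 2 / 5)
    (e1 : l1 = ε / 2) (e2 : l2 = ε / 2)
    (e3 : l3 = 1 / 2 - ε / 4) (e4 : l4 = 1 / 2 - 3 * ε / 4)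
    (eα : α = (l3 ^ 2 - (l1 - l2) ^ 2) / (l3 * (l3 + l1 + l2))) :
    (0 < l1 ∧ 0 < l2 ∧ 0 < l3 ∧ 0 < l4) ∧
    (l4 < l3 ∧ l3 < l4 + l1 + l2 ∧ l4 + l1 < l3 + l2 ∧ l4 + l2 < l3 + l1) ∧
    l4 - α * l3 = (ε / 4) * (1 - 5 * ε / 2) / (1 / 2 + 3 * ε / 4) ∧
    0 ≤ l4 - α * l3 := by
  subst e1 e2 e3 e4 eα
  have h3 : (0:ℝ) < 1 / 2 - ε / 4 := by linarith
  have hs : (0:ℝ) < 1 / 2 + 3 * ε / 4 := by linarith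
  have key : (1 / 2 - 3 * ε / 4) -
      (((1 / 2 - ε / 4) ^ 2 - (ε / 2 - ε / 2) ^ 2) /
        ((1 / 2 - ε / 4) * ((1 / 2 - ε / 4) + ε / 2 + ε / 2))) * (1 / 2 - ε / 4)
      = (ε / 4) * (1 - 5 * ε / 2) / (1 / 2 + 3 * ε / 4) := by
    have hC : (0:ℝ) < (1 / 2 - ε / 4) * ((1 / 2 - ε / 4) + ε / 2 + ε / 2) := by
      positivity
    rw [sub_eq_iff_eq_add, div_mul_eq_mul_div (c := 1 / 2 - ε / 4), div_add_div _ _ hs.ne' hC.ne', eq_div_iff (by positivity)]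
    ring
  refine ⟨⟨by linarith, by linarith, h3, by linarith⟩,
    ⟨by linarith, by linarith, by linarith, by linarith⟩, key, ?_⟩
  rw [key]
  have h1 : (0:ℝ) ≤ (ε / 4) * (1 - 5 * ε / 2) := by nlinarith
  positivity
end
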